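/- Let H be a real Hilbert space, let C ⊆ H be a nonempty closed convex subset, and let T : C → C be a mapping for which there exist k ∈ [0, ∞) and h ∈ [0, 1) such that ‖k(x−y) + Tx − Ty‖ ≤ h·max{‖x − Tx‖, ‖y − Ty‖} for all x, y ∈ C. Then T has a unique fixed point x* ∈ C, and with λ = 1/(k+1) the iterative algorithm xₙ₊₁ = (1−λ)xₙ + λT xₙ converges strongly to x* for any x₀ ∈ C. -/

import Mathlib

/-- Krasnoselskij projection-type algorithm for `(k, h)`-enriched Bianchini
mappings on a nonempty closed convex subset `C` of a real Hilbert space: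
`T` has a unique fixed point `x* ∈ C` and, with `λ = 1/(k+1)`, the iteration
`xₙ₊₁ = (1−λ)xₙ + λ T xₙ` converges strongly to `x*` for any `x₀ ∈ C`. -/
theorem enrichedBianchini_krasnoselskij_hilbert
    {H : Type*} [NormedAddCommGroup H] [InnerProductSpace ℝ H] [CompleteSpace H]
    (C : Set H) (hC : IsClosed C) (hCc : Convex ℝ C) (hCne : C.Nonempty)
    (T : H → H) (hTC : ∀ x ∈ C, T x ∈ C)
    (k h : ℝ) (hk : 0 ≤ k) (hh0 : 0 ≤ h) (hh : h < 1)
    (hT : ∀ x ∈ C, ∀ y ∈ C,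
      ‖k • (x - y) + (T x - T y)‖ ≤ h * max ‖x - T x‖ ‖y - T y‖) :
    ∃ p : H, p ∈ C ∧ T p = p ∧ (∀ q ∈ C, T q = q → q = p) ∧
      ∀ x : ℕ → H, x 0 ∈ C →
        (∀ n : ℕ, x (n + 1) = (1 - 1 / (k + 1)) • x n + (1 / (k + 1)) • T (x n)) →
        Filter.Tendsto x Filter.atTop (nhds p) := by
  have hk1 : (0:ℝ) < k + 1 := by linarith
  set l : ℝ := 1 / (k + 1) with hl
  have hl0 : 0 < l := by positivity
  have hl1 : l ≤ 1 := by rw [hl, div_le_one hk1]; linarith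
  have hlk : 1 - l = l * k := by rw [hl]; field_simp; ring
  set S : H → H := fun x => (1 - l) • x + l • T x with hS
  have hSC : ∀ x ∈ C, S x ∈ C := fun x hx =>
    hCc hx (hTC x hx) (by linarith) hl0.le (by ring)
  have hdiff : ∀ x y : H, S x - S y = l • (k • (x - y) + (T x - T y)) := by
    intro x y
    show ((1 - l) • x + l • T x) - ((1 - l) • y + l • T y) = _
    rw [hlk]
    module
  have hfix : ∀ x : H, x - S x = l • (x - T x) := by
    intro x
    simp only [hS]
    module
  have hfixn : ∀ x : H, ‖x - S x‖ = l * ‖x - T x‖ := by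
    intro x
    rw [hfix, norm_smul, Real.norm_eq_abs, abs_of_pos hl0]
  have key : ∀ x ∈ C, ∀ y ∈ C, ‖S x - S y‖ ≤ h * max ‖x - S x‖ ‖y - S y‖ := by
    intro x hx y hy
    rw [hdiff, norm_smul, Real.norm_eq_abs, abs_of_pos hl0, hfixn, hfixn,
      ← mul_max_of_nonneg _ _ hl0.le]
    calc l * ‖k • (x - y) + (T x - T y)‖
        ≤ l * (h * max ‖x - T x‖ ‖y - T y‖) := by
          exact mul_le_mul_of_nonneg_left (hT x hx y hy) hl0.le
      _ = h * (l * max ‖x - T x‖ ‖y - T y‖) := by ring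
  -- the iteration converges to a fixed point of S
  have conv : ∀ x : ℕ → H, x 0 ∈ C → (∀ n, x (n + 1) = S (x n)) →
      ∃ q, q ∈ C ∧ S q = q ∧ Filter.Tendsto x Filter.atTop (nhds q) := by
    intro x hx0 hrec
    have hxC : ∀ n, x n ∈ C := by
      intro n
      induction n with
      | zero => exact hx0
      | succ n ih => rw [hrec]; exact hSC _ ih
    have hd : ∀ n, ‖x (n + 1) - x (n + 2)‖ ≤ h * ‖x n - x (n + 1)‖ := by
      intro n
      have hkey := key (x n) (hxC n) (x (n + 1)) (hxC (n + 1))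
      rw [← hrec n, ← hrec (n + 1)] at hkey
      rcases max_cases ‖x n - x (n + 1)‖ ‖x (n + 1) - x (n + 2)‖ with
        ⟨he, _⟩ | ⟨he, hle⟩
      · rwa [he] at hkey
      · rw [he] at hkey
        nlinarith [norm_nonneg (x n - x (n + 1)), norm_nonneg (x (n + 1) - x (n + 2))]
    have hgeo : ∀ n, ‖x n - x (n + 1)‖ ≤ ‖x 0 - x 1‖ * h ^ n := by
      intro n
      induction n with
      | zero => simp
      | succ n ih =>
        calc ‖x (n + 1) - x (n + 2)‖ ≤ h * ‖x n - x (n + 1)‖ := hd n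
          _ ≤ h * (‖x 0 - x 1‖ * h ^ n) := mul_le_mul_of_nonneg_left ih hh0
          _ = ‖x 0 - x 1‖ * h ^ (n + 1) := by ring
    have hcauchy : CauchySeq x :=
      cauchySeq_of_le_geometric h ‖x 0 - x 1‖ hh
        (fun n => by rw [dist_eq_norm]; exact hgeo n)
    obtain ⟨q, hq⟩ := cauchySeq_tendsto_of_complete hcauchy
    have hqC : q ∈ C := hC.mem_of_tendsto hq (Filter.Eventually.of_forall hxC)
    have hshift : Filter.Tendsto (fun n => x (n + 1)) Filter.atTop (nhds q) :=
      hq.comp (Filter.tendsto_add_atTop_nat 1)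
    have hd0 : Filter.Tendsto (fun n => ‖x n - x (n + 1)‖) Filter.atTop (nhds 0) := by
      have := (hq.sub hshift).norm
      simpa using this
    have h1 : Filter.Tendsto (fun n => ‖x (n + 1) - S q‖) Filter.atTop
        (nhds ‖q - S q‖) := (hshift.sub tendsto_const_nhds).norm
    have h2 : Filter.Tendsto (fun n => h * max ‖x n - x (n + 1)‖ ‖q - S q‖)
        Filter.atTop (nhds (h * max 0 ‖q - S q‖)) :=
      (hd0.max tendsto_const_nhds).const_mul h
    have hle : ‖q - S q‖ ≤ h * max 0 ‖q - S q‖ := by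
      refine le_of_tendsto_of_tendsto' h1 h2 (fun n => ?_)
      rw [hrec n]
      exact key (x n) (hxC n) q hqC
    rw [max_eq_right (norm_nonneg _)] at hle
    have hz : ‖q - S q‖ = 0 := by nlinarith [norm_nonneg (q - S q)]
    have hSq : S q = q := by
      have := sub_eq_zero.mp (norm_eq_zero.mp hz)
      exact this.symm
    exact ⟨q, hqC, hSq, hq⟩
  -- T-fixed points correspond to S-fixed points
  have hST : ∀ q : H, S q = q → T q = q := by
    intro q hq
    have h0 : q - S q = 0 := by rw [hq, sub_self]
    rw [hfix] at h0
    have := (smul_eq_zero.mp h0).resolve_left (ne_of_gt hl0)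
    have := sub_eq_zero.mp this
    exact this.symm
  -- build the fixed point from an iteration started at some point of C
  obtain ⟨x0, hx0⟩ := hCne
  obtain ⟨p, hpC, hSp, _⟩ := conv (fun n => S^[n] x0) hx0
    (fun n => Function.iterate_succ_apply' S n x0)
  have hTp : T p = p := hST p hSp
  refine ⟨p, hpC, hTp, ?_, ?_⟩
  · -- uniqueness
    intro q hqC hTq
    have := hT p hpC q hqC
    simp only [hTp, hTq, sub_self, norm_zero] at this
    have h0 : ‖k • (p - q) + (p - q)‖ ≤ 0 := by simpa using this
    have heq : k • (p - q) + (p - q) = (k + 1) • (p - q) := by module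
    rw [heq] at h0
    have := norm_eq_zero.mp (le_antisymm h0 (norm_nonneg _))
    have := (smul_eq_zero.mp this).resolve_left (ne_of_gt hk1)
    exact (sub_eq_zero.mp this).symm
  · -- convergence of any iteration
    intro x hx0' hrec
    obtain ⟨q, hqC, hSq, hconv⟩ := conv x hx0' (fun n => hrec n)
    have hTq : T q = q := hST q hSq
    have hpq : q = p := by
      have := hT p hpC q hqC
      simp only [hTp, hTq, sub_self, norm_zero] at this
      have h0 : ‖k • (p - q) + (p - q)‖ ≤ 0 := by simpa using this
      have heq : k • (p - q) + (p - q) = (k + 1) • (p - q) := by module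
      rw [heq] at h0
      have := norm_eq_zero.mp (le_antisymm h0 (norm_nonneg _))
      have := (smul_eq_zero.mp this).resolve_left (ne_of_gt hk1)
      exact (sub_eq_zero.mp this).symm
    rwa [hpq] at hconv
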